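/- Let a, c ∈ ℂ, R > 0, and suppose 2√(|c| - R(1+|a|)) - |a| > 1 (in particular |c| > R(1+|a|)). Then for every x ∈ ℂ with |x|² ≥ |c| - R(1+|a|) and every (ξ₁, ξ₂) ∈ ℂ² with |ξ₁| > |ξ₂|, we have |2x·ξ₁ - a·ξ₂| > |ξ₁|. In other words, the derivative of F(x,y) = (x² + c - a·y, x) maps the horizontal cone {|ξ₂| < |ξ₁|} strictly into itself at all such points. -/
import Mathlib

/-- If `2√(|c| - R(1+|a|)) - |a| > 1`, then for every `x` with
`|x|² ≥ |c| - R(1+|a|)` and every tangent vector `(ξ₁, ξ₂)` in the horizontal cone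
(`|ξ₁| > |ξ₂|`), we have `|2x·ξ₁ - a·ξ₂| > |ξ₁|`: the derivative of the Hénon map
`F(x,y) = (x² + c - a·y, x)` maps the horizontal cone strictly into itself. -/
theorem stmt12
    (a c : ℂ) (R : ℝ) (hR : 0 < R)
    (hcone : 2 * Real.sqrt (‖c‖ - R * (1 + ‖a‖)) - ‖a‖ > 1)
    (x : ℂ) (hx : ‖x‖ ^ 2 ≥ ‖c‖ - R * (1 + ‖a‖))
    (ξ₁ ξ₂ : ℂ) (hξ : ‖ξ₁‖ > ‖ξ₂‖) :
    ‖2 * x * ξ₁ - a * ξ₂‖ > ‖ξ₁‖ := by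
  have hx' : Real.sqrt (‖c‖ - R * (1 + ‖a‖)) ≤ ‖x‖ := by
    calc Real.sqrt (‖c‖ - R * (1 + ‖a‖)) ≤ Real.sqrt (‖x‖ ^ 2) := Real.sqrt_le_sqrt hx
    _ = ‖x‖ := by rw [Real.sqrt_sq (norm_nonneg x)]
  have h1 : ‖2 * x * ξ₁ - a * ξ₂‖ ≥ ‖2 * x * ξ₁‖ - ‖a * ξ₂‖ := norm_sub_norm_le _ _
  rw [norm_mul, norm_mul, norm_mul] at h1
  have h2 : ‖(2:ℂ)‖ = 2 := by norm_num
  rw [h2] at h1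
  nlinarith [norm_nonneg ξ₂, norm_nonneg a, norm_nonneg ξ₁,
    mul_le_mul_of_nonneg_left hξ.le (norm_nonneg a)]
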